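/- Let ℛ be a nonempty finite set, ε > 0, and let q : Xⁿ × ℛ → ℝ be such that for every r ∈ ℛ the map S ↦ q(S, r) has sensitivity 1. The exponential mechanism on input S outputs r ∈ ℛ with probability proportional to exp(ε·q(S,r)/2). Then (1) the exponential mechanism is ε-differentially private, and (2) for every dataset S and every β ∈ (0,1), with probability at least 1 − β the sampled element r̂ satisfies q(S, r̂) ≥ max_{r ∈ ℛ} q(S, r) − 2·log(|ℛ|/β)/ε. -/

import Mathlib

/-- Two datasets in `Xⁿ` are neighbors if they differ in at most one entry. -/
def Neighboring {X : Type*} {n : ℕ} (S S' : Fin n → X) : Prop :=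
  ∃ i : Fin n, ∀ j : Fin n, j ≠ i → S j = S' j

/-- **Exponential mechanism (Theorem 2.6, McSherry–Talwar).** Let `ℛ` be a nonempty finite
set, `ε > 0`, and `q : Xⁿ × ℛ → ℝ` a score function of sensitivity `1` in its first argument.
The exponential mechanism, which outputs `r ∈ ℛ` with probability proportional to
`exp(ε·q(S,r)/2)`, satisfies:
(1) `ε`-differential privacy, and
(2) for every `S` and `β ∈ (0,1)`, with probability at least `1 − β` the sampled `rr`
satisfies `q(S,rr) ≥ max_{r ∈ ℛ} q(S,r) − 2·log(|ℛ|/β)/ε`. -/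
theorem stmt_4 (X : Type*) (n : ℕ) (R : Type*) [Fintype R] [Nonempty R]
    (ε : ℝ) (hε : 0 < ε) (q : (Fin n → X) → R → ℝ)
    (hq : ∀ r : R, ∀ S S' : Fin n → X, Neighboring S S' → |q S r - q S' r| ≤ 1) :
    ∃ M : (Fin n → X) → PMF R,
      (∀ S r, M S r = ENNReal.ofReal (Real.exp (ε * q S r / 2)) /
          ∑ r' : R, ENNReal.ofReal (Real.exp (ε * q S r' / 2))) ∧
      (∀ S S' : Fin n → X, Neighboring S S' → ∀ T : Set R,
          (M S).toOuterMeasure T ≤ ENNReal.ofReal (Real.exp ε) * (M S').toOuterMeasure T) ∧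
      (∀ S : Fin n → X, ∀ β : ℝ, β ∈ Set.Ioo (0 : ℝ) 1 →
          ENNReal.ofReal (1 - β) ≤ (M S).toOuterMeasure
            {rr : R | (Finset.univ.sup' Finset.univ_nonempty (q S)) -
              2 * Real.log ((Fintype.card R : ℝ) / β) / ε ≤ q S rr}) := by
  classical
  set D : (Fin n → X) → ℝ := fun S => ∑ r' : R, Real.exp (ε * q S r' / 2) with hD
  have hDpos : ∀ S, 0 < D S := fun S =>
    Finset.sum_pos (fun r _ => Real.exp_pos _) Finset.univ_nonempty
  set f : (Fin n → X) → R → ℝ := fun S r => Real.exp (ε * q S r / 2) / D S with hf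
  have hfpos : ∀ S r, 0 < f S r := fun S r => div_pos (Real.exp_pos _) (hDpos S)
  have hsum : ∀ S, ∑ r : R, ENNReal.ofReal (f S r) = 1 := by
    intro S
    rw [← ENNReal.ofReal_sum_of_nonneg (fun r _ => (hfpos S r).le)]
    simp only [hf, ← Finset.sum_div, div_self (hDpos S).ne', ENNReal.ofReal_one]
    change ENNReal.ofReal (D S / D S) = 1
    rw [div_self (hDpos S).ne', ENNReal.ofReal_one]
  refine ⟨fun S => PMF.ofFintype (fun r => ENNReal.ofReal (f S r)) (hsum S), ?_, ?_, ?_⟩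
  · intro S r
    rw [PMF.ofFintype_apply, hf]
    simp only
    rw [ENNReal.ofReal_div_of_pos (hDpos S), hD,
      ENNReal.ofReal_sum_of_nonneg (fun r _ => (Real.exp_pos _).le)]
  · intro S S' hN T
    have key : ∀ r, f S r ≤ Real.exp ε * f S' r := by
      intro r
      have hle' : ∀ r', Real.exp (ε * q S' r' / 2) ≤
          Real.exp (ε / 2) * Real.exp (ε * q S r' / 2) := by
        intro r'
        rw [← Real.exp_add]
        apply Real.exp_le_exp.2
        have h := (abs_le.1 (hq r' S S' hN)).1
        nlinarith
      have hD' : D S' ≤ Real.exp (ε / 2) * D S := by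
        rw [hD, Finset.mul_sum]
        exact Finset.sum_le_sum fun r' _ => hle' r'
      have hle : Real.exp (ε * q S r / 2) ≤
          Real.exp (ε / 2) * Real.exp (ε * q S' r / 2) := by
        rw [← Real.exp_add]
        apply Real.exp_le_exp.2
        have h := (abs_le.1 (hq r S S' hN)).2
        nlinarith
      have hee : Real.exp (ε / 2) * Real.exp (ε / 2) = Real.exp ε := by
        rw [← Real.exp_add]; ring_nf
      rw [hf]
      simp only
      rw [mul_div_assoc' (Real.exp ε), div_le_div_iff₀ (hDpos S) (hDpos S')]
      calc Real.exp (ε * q S r / 2) * D S'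
          ≤ (Real.exp (ε / 2) * Real.exp (ε * q S' r / 2)) *
            (Real.exp (ε / 2) * D S) :=
            mul_le_mul hle hD' (hDpos S').le (by positivity)
        _ = Real.exp ε * Real.exp (ε * q S' r / 2) * D S := by
            rw [← hee]; ring
    rw [PMF.toOuterMeasure_apply, PMF.toOuterMeasure_apply, ← ENNReal.tsum_mul_left]
    apply ENNReal.tsum_le_tsum
    intro r
    by_cases hr : r ∈ T
    · rw [Set.indicator_of_mem hr, Set.indicator_of_mem hr, PMF.ofFintype_apply,
        PMF.ofFintype_apply, ← ENNReal.ofReal_mul (Real.exp_pos ε).le]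
      exact ENNReal.ofReal_le_ofReal (key r)
    · simp [Set.indicator_of_notMem hr]
  · intro S β hβ
    obtain ⟨hβ0, hβ1⟩ := hβ
    set m : ℝ := Finset.univ.sup' Finset.univ_nonempty (q S) with hm
    set c : ℝ := 2 * Real.log ((Fintype.card R : ℝ) / β) / ε with hc
    have hcard : (0 : ℝ) < (Fintype.card R : ℝ) := by
      exact_mod_cast Fintype.card_pos
    -- D S ≥ exp (ε * m / 2)
    obtain ⟨r₀, _, hr₀⟩ := Finset.exists_mem_eq_sup' (Finset.univ_nonempty (α := R)) (q S)
    have hDm : Real.exp (ε * m / 2) ≤ D S := by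
      have h : Real.exp (ε * q S r₀ / 2) ≤ ∑ r' : R, Real.exp (ε * q S r' / 2) :=
        Finset.single_le_sum (f := fun r => Real.exp (ε * q S r / 2))
          (fun r _ => (Real.exp_pos _).le) (Finset.mem_univ r₀)
      rw [hm, hr₀]
      exact h
    have hexp : Real.exp (ε * (m - c) / 2) / Real.exp (ε * m / 2) =
        β / (Fintype.card R : ℝ) := by
      rw [← Real.exp_sub]
      have h1 : ε * (m - c) / 2 - ε * m / 2 = -(ε * c / 2) := by ring
      have h2 : ε * c / 2 = Real.log ((Fintype.card R : ℝ) / β) := by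
        rw [hc]; field_simp
      rw [h1, h2, Real.exp_neg, Real.exp_log (by positivity), inv_div]
    have hbound : ∀ r, ¬ (m - c ≤ q S r) → f S r ≤ β / (Fintype.card R : ℝ) := by
      intro r hr
      rw [← hexp, hf]
      simp only
      apply div_le_div₀ (Real.exp_pos _).le _ (Real.exp_pos _) hDm
      exact Real.exp_le_exp.2 (by nlinarith [le_of_not_ge hr])
    have hbadsum : ∑ r ∈ Finset.univ.filter (fun r => ¬ (m - c ≤ q S r)), f S r ≤ β := by
      calc ∑ r ∈ Finset.univ.filter (fun r => ¬ (m - c ≤ q S r)), f S r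
          ≤ (Finset.univ.filter (fun r => ¬ (m - c ≤ q S r))).card •
            (β / (Fintype.card R : ℝ)) := by
            apply Finset.sum_le_card_nsmul
            intro r hr
            exact hbound r (Finset.mem_filter.1 hr).2
        _ ≤ (Fintype.card R) • (β / (Fintype.card R : ℝ)) := by
            apply nsmul_le_nsmul_left (by positivity)
            simpa using Finset.card_filter_le Finset.univ _
        _ = β := by
            rw [nsmul_eq_mul]
            field_simp
    have hgoodsum : 1 - β ≤ ∑ r ∈ Finset.univ.filter (fun r => m - c ≤ q S r), f S r := by
      have htot : ∑ r ∈ Finset.univ.filter (fun r => m - c ≤ q S r), f S r +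
          ∑ r ∈ Finset.univ.filter (fun r => ¬ (m - c ≤ q S r)), f S r = 1 := by
        rw [Finset.sum_filter_add_sum_filter_not]
        rw [hf]
        simp only [← Finset.sum_div]
        rw [div_self (hDpos S).ne']
      linarith
    rw [PMF.toOuterMeasure_apply, tsum_fintype]
    have heq : ∀ r : R, ({rr : R | m - c ≤ q S rr}).indicator
        (fun r => ENNReal.ofReal (f S r)) r =
        if m - c ≤ q S r then ENNReal.ofReal (f S r) else 0 := by
      intro r
      rw [Set.indicator_apply]
      rfl
    calc ENNReal.ofReal (1 - β)
        ≤ ENNReal.ofReal (∑ r ∈ Finset.univ.filter (fun r => m - c ≤ q S r), f S r) :=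
          ENNReal.ofReal_le_ofReal hgoodsum
      _ = ∑ r ∈ Finset.univ.filter (fun r => m - c ≤ q S r), ENNReal.ofReal (f S r) :=
          ENNReal.ofReal_sum_of_nonneg (fun r _ => (hfpos S r).le)
      _ = ∑ r : R, if m - c ≤ q S r then ENNReal.ofReal (f S r) else 0 :=
          (Finset.sum_filter _ _)
      _ = _ := by
          apply Finset.sum_congr rfl
          intro r _
          by_cases h : m - c ≤ q S r
          · rw [if_pos h, Set.indicator_of_mem (by exact h), PMF.ofFintype_apply]
          · rw [if_neg h, Set.indicator_of_notMem (by exact h)]
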